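/- For bounded operators T₁, T₂ on a complex Hilbert space H, the numerical radius of the block operator [[T₁, T₂],[T₂, iT₁]] on H ⊕ H is at most w(T₁) + w(T₂). -/

import Mathlib

noncomputable def numRadius {E : Type*} [NormedAddCommGroup E] [InnerProductSpace ℂ E]
    (T : E →L[ℂ] E) : ℝ :=
  sSup {r : ℝ | ∃ x : E, ‖x‖ = 1 ∧ r = ‖(inner ℂ (T x) x : ℂ)‖}

noncomputable def blockOp {H : Type*} [NormedAddCommGroup H] [InnerProductSpace ℂ H]
    (n : ℕ) (M : Fin n → Fin n → H →L[ℂ] H) :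
    (PiLp 2 fun _ : Fin n => H) →L[ℂ] (PiLp 2 fun _ : Fin n => H) :=
  (PiLp.continuousLinearEquiv 2 ℂ (fun _ : Fin n => H)).symm.toContinuousLinearMap ∘L
    (ContinuousLinearMap.pi fun i => ∑ j, (M i j).comp (ContinuousLinearMap.proj j)) ∘L
    (PiLp.continuousLinearEquiv 2 ℂ (fun _ : Fin n => H)).toContinuousLinearMap

section aux
variable {E : Type*} [NormedAddCommGroup E] [InnerProductSpace ℂ E]

lemma numRadius_bdd (T : E →L[ℂ] E) :
    BddAbove {r : ℝ | ∃ x : E, ‖x‖ = 1 ∧ r = ‖(inner ℂ (T x) x : ℂ)‖} := by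
  refine ⟨‖T‖, ?_⟩
  rintro r ⟨x, hx, rfl⟩
  calc ‖(inner ℂ (T x) x : ℂ)‖ ≤ ‖T x‖ * ‖x‖ := norm_inner_le_norm _ _
    _ ≤ ‖T‖ * ‖x‖ * ‖x‖ := by gcongr; exact T.le_opNorm x
    _ = ‖T‖ := by rw [hx]; ring

lemma inner_le_numRadius (T : E →L[ℂ] E) {x : E} (hx : ‖x‖ = 1) :
    ‖(inner ℂ (T x) x : ℂ)‖ ≤ numRadius T :=
  le_csSup (numRadius_bdd T) ⟨x, hx, rfl⟩

lemma numRadius_nonneg (T : E →L[ℂ] E) : 0 ≤ numRadius T := by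
  by_cases h : ∃ x : E, ‖x‖ = 1
  · obtain ⟨x, hx⟩ := h
    exact le_trans (norm_nonneg _) (inner_le_numRadius T hx)
  · have he : {r : ℝ | ∃ x : E, ‖x‖ = 1 ∧ r = ‖(inner ℂ (T x) x : ℂ)‖} = ∅ := by
      ext r; simp only [Set.mem_setOf_eq, Set.mem_empty_iff_false, iff_false]
      rintro ⟨x, hx, -⟩; exact h ⟨x, hx⟩
    rw [numRadius, he, Real.sSup_empty]

lemma inner_le_numRadius_mul (T : E →L[ℂ] E) (z : E) :
    ‖(inner ℂ (T z) z : ℂ)‖ ≤ numRadius T * (‖z‖ * ‖z‖) := by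
  rcases eq_or_ne z 0 with rfl | hz
  · simp
  · have hz' : (0:ℝ) < ‖z‖ := norm_pos_iff.mpr hz
    set u : E := (‖z‖⁻¹ : ℂ) • z with hu
    have hun : ‖u‖ = 1 := by
      rw [hu, norm_smul]
      simp [norm_inv, hz'.ne']
    have h1 : (inner ℂ (T u) u : ℂ) = (‖z‖⁻¹ : ℂ) * (‖z‖⁻¹ : ℂ) * inner ℂ (T z) z := by
      rw [hu, map_smul, inner_smul_left, inner_smul_right]
      simp [Complex.conj_ofReal]
      ring
    have h2 : ‖(inner ℂ (T u) u : ℂ)‖ = ‖z‖⁻¹ * ‖z‖⁻¹ * ‖(inner ℂ (T z) z : ℂ)‖ := by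
      rw [h1]; simp [norm_mul, Complex.norm_real]
    have h3 := inner_le_numRadius T hun
    rw [h2] at h3
    have := mul_le_mul_of_nonneg_right h3 (le_of_lt (mul_pos hz' hz'))
    calc ‖(inner ℂ (T z) z : ℂ)‖
        = ‖z‖⁻¹ * ‖z‖⁻¹ * ‖(inner ℂ (T z) z : ℂ)‖ * (‖z‖ * ‖z‖) := by
          field_simp
      _ ≤ numRadius T * (‖z‖ * ‖z‖) := this

lemma key (T : E →L[ℂ] E) (x y : E) :
    ‖(inner ℂ (T x) y + inner ℂ (T y) x : ℂ)‖ ≤ numRadius T * (‖x‖ * ‖x‖ + ‖y‖ * ‖y‖) := by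
  have h1 : (inner ℂ (T (x+y)) (x+y) - inner ℂ (T (x-y)) (x-y) : ℂ)
      = 2 * (inner ℂ (T x) y + inner ℂ (T y) x) := by
    simp only [map_add, map_sub, inner_add_left, inner_add_right, inner_sub_left,
      inner_sub_right]
    ring
  have h2 : ‖(inner ℂ (T x) y + inner ℂ (T y) x : ℂ)‖
      = ‖(inner ℂ (T (x+y)) (x+y) - inner ℂ (T (x-y)) (x-y) : ℂ)‖ / 2 := by
    rw [h1, norm_mul]
    simp
  rw [h2]
  have h3 : ‖(inner ℂ (T (x+y)) (x+y) - inner ℂ (T (x-y)) (x-y) : ℂ)‖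
      ≤ numRadius T * (‖x+y‖ * ‖x+y‖) + numRadius T * (‖x-y‖ * ‖x-y‖) :=
    le_trans (norm_sub_le _ _)
      (add_le_add (inner_le_numRadius_mul T _) (inner_le_numRadius_mul T _))
  have h4 := parallelogram_law_with_norm_mul ℂ x y
  have h5 : numRadius T * (‖x+y‖ * ‖x+y‖) + numRadius T * (‖x-y‖ * ‖x-y‖)
      = 2 * (numRadius T * (‖x‖ * ‖x‖ + ‖y‖ * ‖y‖)) := by
    rw [← mul_add, h4]; ring
  linarith [h3, h5]

end aux

lemma blockOp_apply {H : Type*} [NormedAddCommGroup H] [InnerProductSpace ℂ H]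
    (n : ℕ) (M : Fin n → Fin n → H →L[ℂ] H) (x : PiLp 2 fun _ : Fin n => H) (i : Fin n) :
    blockOp n M x i = ∑ j, M i j (x j) := by
  simp [blockOp, ContinuousLinearMap.sum_apply]


variable {H : Type*} [NormedAddCommGroup H] [InnerProductSpace ℂ H]
theorem stmt14 (T₁ T₂ : H →L[ℂ] H) :
    numRadius (blockOp 2 !![T₁, T₂; T₂, Complex.I • T₁]) ≤
      numRadius T₁ + numRadius T₂ := by
  apply Real.sSup_le
  · rintro r ⟨x, hx, rfl⟩
    set x₀ := x 0
    set x₁ := x 1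
    have hnorm : ‖x₀‖ * ‖x₀‖ + ‖x₁‖ * ‖x₁‖ = 1 := by
      have := PiLp.norm_sq_eq_of_L2 (fun _ : Fin 2 => H) x
      rw [hx] at this
      simp [Fin.sum_univ_two] at this
      nlinarith [this]
    have happ : (inner ℂ (blockOp 2 !![T₁, T₂; T₂, Complex.I • T₁] x) x : ℂ)
        = (inner ℂ (T₁ x₀) x₀ + inner ℂ (T₂ x₁) x₀)
          + ((inner ℂ (T₂ x₀) x₁ : ℂ) + (starRingEnd ℂ) Complex.I * inner ℂ (T₁ x₁) x₁) := by
      rw [PiLp.inner_apply, Fin.sum_univ_two]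
      erw [blockOp_apply, blockOp_apply, Fin.sum_univ_two, Fin.sum_univ_two]
      simp [inner_add_left, inner_smul_left]
      rfl
    rw [happ]
    have e1 := inner_le_numRadius_mul T₁ x₀
    have e2 := inner_le_numRadius_mul T₁ x₁
    have e3 := key T₂ x₁ x₀
    have habs : ‖((inner ℂ (T₁ x₀) x₀ + inner ℂ (T₂ x₁) x₀)
          + ((inner ℂ (T₂ x₀) x₁ : ℂ) + (starRingEnd ℂ) Complex.I * inner ℂ (T₁ x₁) x₁) : ℂ)‖
        ≤ ‖(inner ℂ (T₁ x₀) x₀ : ℂ)‖ + ‖(inner ℂ (T₂ x₁) x₀ + inner ℂ (T₂ x₀) x₁ : ℂ)‖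
          + ‖(inner ℂ (T₁ x₁) x₁ : ℂ)‖ := by
      calc _ = ‖((inner ℂ (T₁ x₀) x₀ : ℂ) + ((inner ℂ (T₂ x₁) x₀ + inner ℂ (T₂ x₀) x₁ : ℂ))
          + (starRingEnd ℂ) Complex.I * inner ℂ (T₁ x₁) x₁)‖ := by ring_nf
        _ ≤ _ := by
          refine le_trans (norm_add_le _ _) ?_
          gcongr
          · exact norm_add_le _ _
          · rw [norm_mul]; simp
    refine le_trans habs ?_
    nlinarith [e1, e2, e3, hnorm, numRadius_nonneg T₁, numRadius_nonneg T₂]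
  · exact add_nonneg (numRadius_nonneg T₁) (numRadius_nonneg T₂)
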